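/- arXiv:2312.14778 — 4 statements merged into one kernel-verified Lean document; each statement's English description precedes it below -/
import Mathlib

section
/- For any natural number n ≥ 1, the least common multiple of all binomial coefficients C(i, j) with 0 ≤ j ≤ i ≤ n equals the least common multiple of the integers 1, 2, ..., n. -/
lemma choose_dvd_lcm_Icc {n i j : ℕ} (hi : i ≤ n) (hij : j ≤ i) (hn : 1 ≤ n) :
    i.choose j ∣ (Finset.Icc 1 n).lcm id := by
  have hL : (Finset.Icc 1 n).lcm id ≠ 0 := by
    rw [Ne, Finset.lcm_eq_zero_iff]
    intro h
    simp only [Set.mem_image, Finset.mem_coe, Finset.mem_Icc, id] at h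
    obtain ⟨x, ⟨hx1, _⟩, hx0⟩ := h
    omega
  rcases Nat.eq_zero_or_pos i with rfl | hi0
  · interval_cases j; simp
  have hc : i.choose j ≠ 0 := (Nat.choose_pos hij).ne'
  rw [← Nat.factorization_le_iff_dvd hc hL]
  intro p
  by_cases hp : p.Prime
  · have hle : p ^ (i.choose j).factorization p ≤ n :=
      le_trans (Nat.pow_factorization_choose_le hi0) hi
    have hdvd : p ^ (i.choose j).factorization p ∣ (Finset.Icc 1 n).lcm id := by
      have : p ^ (i.choose j).factorization p ∈ Finset.Icc 1 n :=
        Finset.mem_Icc.2 ⟨Nat.one_le_iff_ne_zero.2 (pow_ne_zero _ hp.pos.ne'), hle⟩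
      exact Finset.dvd_lcm this
    exact (Nat.Prime.pow_dvd_iff_le_factorization hp hL).1 hdvd
  · simp [Nat.factorization_eq_zero_of_not_prime _ hp]

/-- For `n ≥ 1`, the lcm of all binomial coefficients `C(i,j)` with `0 ≤ j ≤ i ≤ n`
equals `lcm {1, …, n}`. -/
theorem lcm_binomials_eq_lcm_range (n : ℕ) (hn : 1 ≤ n) :
    (Finset.range (n + 1)).lcm (fun i => (Finset.range (i + 1)).lcm (fun j => i.choose j))
      = (Finset.Icc 1 n).lcm id := by
  apply Nat.dvd_antisymm
  · apply Finset.lcm_dvd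
    intro i hi
    apply Finset.lcm_dvd
    intro j hj
    exact choose_dvd_lcm_Icc (Nat.lt_succ_iff.mp (Finset.mem_range.mp hi)) (Nat.lt_succ_iff.mp (Finset.mem_range.mp hj)) hn
  · apply Finset.lcm_dvd
    intro k hk
    rw [Finset.mem_Icc] at hk
    have h1 : k ∈ Finset.range (n + 1) := Finset.mem_range.2 (by omega)
    have h2 : (1 : ℕ) ∈ Finset.range (k + 1) := Finset.mem_range.2 (by omega)
    calc (id k : ℕ) = k.choose 1 := by simp
    _ ∣ (Finset.range (k + 1)).lcm (fun j => k.choose j) := Finset.dvd_lcm h2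
    _ ∣ _ := Finset.dvd_lcm (f := fun i => (Finset.range (i + 1)).lcm (fun j => i.choose j)) h1
end

section
/- For natural numbers s ≥ 2, i with 1 ≤ i ≤ s, the following polynomial identity holds in Q[k]: 1 = (Σ_{j=0}^{s-i-1} (-1)^{s-j} ((s-i-j)!/(s-j-1)!) C(k,j) C(k-j-1, s-i-j-1)) · (k-s+1)^{rising (i-1)} + (Σ_{j=s-i+1}^{s-1} (-1)^{s-j-1} ((i+j-s)!/j!) C(k-j-1, s-j-1) C(k-s+i-1, i+j-s-1)) · k^{falling (s-i)}, where x^{rising n} = x(x+1)···(x+n-1) and x^{falling n} = x(x-1)···(x-n+1), and C(x, m) = x^{falling m}/m! denotes the generalized binomial coefficient polynomial. -/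
open Polynomial Finset

/-- Rising factorial `p(p+1)⋯(p+n-1)` of a polynomial. -/
noncomputable def risingP (p : Polynomial ℚ) (n : ℕ) : Polynomial ℚ :=
  ∏ i ∈ Finset.range n, (p + Polynomial.C (i : ℚ))

/-- Falling factorial `p(p-1)⋯(p-n+1)` of a polynomial. -/
noncomputable def fallingP (p : Polynomial ℚ) (n : ℕ) : Polynomial ℚ :=
  ∏ i ∈ Finset.range n, (p - Polynomial.C (i : ℚ))

/-- Generalized binomial coefficient polynomial `C(p, m) = p^{falling m} / m!`. -/
noncomputable def chooseP (p : Polynomial ℚ) (m : ℕ) : Polynomial ℚ :=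
  Polynomial.C ((m.factorial : ℚ)⁻¹) * fallingP p m

lemma eval_fallingP (p : Polynomial ℚ) (n : ℕ) (x : ℚ) :
    (fallingP p n).eval x = ∏ r ∈ range n, (p.eval x - r) := by
  simp [fallingP, Polynomial.eval_prod]

lemma eval_risingP (p : Polynomial ℚ) (n : ℕ) (x : ℚ) :
    (risingP p n).eval x = ∏ r ∈ range n, (p.eval x + r) := by
  simp [risingP, Polynomial.eval_prod]

lemma eval_chooseP (p : Polynomial ℚ) (m : ℕ) (x : ℚ) :
    (chooseP p m).eval x = ((m.factorial : ℚ))⁻¹ * ∏ r ∈ range m, (p.eval x - r) := by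
  simp [chooseP, eval_fallingP]

lemma prod_cast_sub (a n : ℕ) (h : n ≤ a) :
    ∏ r ∈ range n, ((a : ℚ) - r) = (a.descFactorial n : ℚ) := by
  rw [Nat.descFactorial_eq_prod_range, Nat.cast_prod]
  refine prod_congr rfl fun r hr => ?_
  rw [Nat.cast_sub (le_of_lt (lt_of_lt_of_le (mem_range.mp hr) h))]

lemma prod_neg_one_sub (m : ℕ) :
    ∏ r ∈ range m, ((-1 : ℚ) - r) = (-1) ^ m * (m.factorial : ℚ) := by
  have : ∀ r ∈ range m, ((-1 : ℚ) - r) = -((r : ℚ) + 1) := by intro r _; ring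
  rw [prod_congr rfl this]
  simp only [neg_eq_neg_one_mul ((_ : ℚ) + 1)]
  rw [prod_mul_distrib, prod_const, card_range]
  congr 1
  push_cast [← Finset.prod_range_add_one_eq_factorial m]
  exact prod_congr rfl fun r _ => by ring

lemma natDegree_fallingP_le (p : Polynomial ℚ) (hp : p.natDegree ≤ 1) (n : ℕ) :
    (fallingP p n).natDegree ≤ n := by
  refine le_trans (Polynomial.natDegree_prod_le _ _) ?_
  calc ∑ r ∈ range n, (p - Polynomial.C (r : ℚ)).natDegree
      ≤ ∑ _r ∈ range n, 1 := by
        refine sum_le_sum fun r _ => ?_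
        refine le_trans (Polynomial.natDegree_sub_le _ _) ?_
        simp [hp]
    _ = n := by simp

lemma natDegree_risingP_le (p : Polynomial ℚ) (hp : p.natDegree ≤ 1) (n : ℕ) :
    (risingP p n).natDegree ≤ n := by
  refine le_trans (Polynomial.natDegree_prod_le _ _) ?_
  calc ∑ r ∈ range n, (p + Polynomial.C (r : ℚ)).natDegree
      ≤ ∑ _r ∈ range n, 1 := by
        refine sum_le_sum fun r _ => ?_
        refine le_trans (Polynomial.natDegree_add_le _ _) ?_
        simp [hp]
    _ = n := by simp

lemma natDegree_chooseP_le (p : Polynomial ℚ) (hp : p.natDegree ≤ 1) (m : ℕ) :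
    (chooseP p m).natDegree ≤ m := by
  refine le_trans (Polynomial.natDegree_mul_le) ?_
  simpa using natDegree_fallingP_le p hp m

lemma natDegree_XsubC_le (a : ℚ) : (Polynomial.X - Polynomial.C a).natDegree ≤ 1 := by
  refine le_trans (Polynomial.natDegree_sub_le _ _) ?_
  simp

/-- The univariate polynomial identity (in `k`) from the paper, equation (eq:cetology). -/
theorem cetology_identity (s i : ℕ) (hs : 2 ≤ s) (hi1 : 1 ≤ i) (his : i ≤ s) :
    (1 : Polynomial ℚ) =
      (∑ j ∈ Finset.range (s - i),
          Polynomial.C ((-1 : ℚ) ^ (s - j) * ((s - i - j).factorial : ℚ)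
              / ((s - j - 1).factorial : ℚ))
            * chooseP Polynomial.X j
            * chooseP (Polynomial.X - Polynomial.C ((j : ℚ) + 1)) (s - i - j - 1))
        * risingP (Polynomial.X - Polynomial.C ((s : ℚ) - 1)) (i - 1)
      + (∑ j ∈ Finset.Icc (s - i + 1) (s - 1),
          Polynomial.C ((-1 : ℚ) ^ (s - j - 1) * ((i + j - s).factorial : ℚ)
              / (j.factorial : ℚ))
            * chooseP (Polynomial.X - Polynomial.C ((j : ℚ) + 1)) (s - j - 1)
            * chooseP (Polynomial.X - Polynomial.C ((s : ℚ) - (i : ℚ) + 1)) (i + j - s - 1))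
        * fallingP Polynomial.X (s - i) := by
  set R : Polynomial ℚ :=
      (∑ j ∈ Finset.range (s - i),
          Polynomial.C ((-1 : ℚ) ^ (s - j) * ((s - i - j).factorial : ℚ)
              / ((s - j - 1).factorial : ℚ))
            * chooseP Polynomial.X j
            * chooseP (Polynomial.X - Polynomial.C ((j : ℚ) + 1)) (s - i - j - 1))
        * risingP (Polynomial.X - Polynomial.C ((s : ℚ) - 1)) (i - 1)
      + (∑ j ∈ Finset.Icc (s - i + 1) (s - 1),
          Polynomial.C ((-1 : ℚ) ^ (s - j - 1) * ((i + j - s).factorial : ℚ)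
              / (j.factorial : ℚ))
            * chooseP (Polynomial.X - Polynomial.C ((j : ℚ) + 1)) (s - j - 1)
            * chooseP (Polynomial.X - Polynomial.C ((s : ℚ) - (i : ℚ) + 1)) (i + j - s - 1))
        * fallingP Polynomial.X (s - i) with hR
  have main : ∀ t : ℕ, t ∈ (range s).erase (s - i) → Polynomial.eval (t : ℚ) R = 1 := by
    intro t ht
    rw [Finset.mem_erase, Finset.mem_range] at ht
    obtain ⟨htne, hts⟩ := ht
    rw [hR, Polynomial.eval_add, Polynomial.eval_mul, Polynomial.eval_mul,
      Polynomial.eval_finset_sum, Polynomial.eval_finset_sum, eval_risingP, eval_fallingP]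
    rcases Nat.lt_or_ge t (s - i) with hcase | hcase
    · -- t < s - i : falling part vanishes, first sum has single term j = t
      have hfall : ∏ r ∈ range (s - i), (Polynomial.X.eval (t : ℚ) - r) = 0 := by
        refine Finset.prod_eq_zero (Finset.mem_range.mpr hcase) ?_
        simp
      rw [hfall, mul_zero, add_zero]
      rw [Finset.sum_eq_single_of_mem t (Finset.mem_range.mpr hcase) ?off1]
      case off1 =>
        intro j hj hne
        rw [Polynomial.eval_mul, Polynomial.eval_mul]
        rcases Nat.lt_or_ge t j with h | h
        · have hz : (chooseP Polynomial.X j).eval (t : ℚ) = 0 := by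
            rw [eval_chooseP, Finset.prod_eq_zero (Finset.mem_range.mpr h) (by simp)]
            ring
          rw [hz]; ring
        · have hjt : j < t := lt_of_le_of_ne h (fun e => hne e)
          have hz : (chooseP (Polynomial.X - Polynomial.C ((j : ℚ) + 1))
              (s - i - j - 1)).eval (t : ℚ) = 0 := by
            rw [eval_chooseP]
            rw [Finset.prod_eq_zero (Finset.mem_range.mpr (show t - j - 1 < s - i - j - 1 by omega)) ?_]
            · ring
            · simp only [Polynomial.eval_sub, Polynomial.eval_X, Polynomial.eval_C]
              rw [show t - j - 1 = t - (j + 1) by omega, Nat.cast_sub (by omega)]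
              push_cast; ring
          rw [hz]; ring
      rw [Polynomial.eval_mul, Polynomial.eval_mul, Polynomial.eval_C,
        eval_chooseP, eval_chooseP]
      simp only [Polynomial.eval_sub, Polynomial.eval_X, Polynomial.eval_C]
      have h1 : ∏ r ∈ range t, ((t : ℚ) - r) = (t.factorial : ℚ) := by
        rw [prod_cast_sub t t le_rfl, Nat.descFactorial_self]
      have h2 : ∏ r ∈ range (s - i - t - 1), ((t : ℚ) - ((t : ℚ) + 1) - r)
          = (-1) ^ (s - i - t - 1) * ((s - i - t - 1).factorial : ℚ) := by
        rw [← prod_neg_one_sub]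
        exact prod_congr rfl fun r _ => by ring
      have h3 : ∏ r ∈ range (i - 1), ((t : ℚ) - ((s : ℚ) - 1) + r)
          = (-1) ^ (i - 1) * (((s - 1 - t).descFactorial (i - 1) : ℕ) : ℚ) := by
        have hc : ∀ r ∈ range (i - 1), ((t : ℚ) - ((s : ℚ) - 1) + r)
            = -1 * ((((s - 1 - t : ℕ)) : ℚ) - r) := by
          intro r _
          rw [show s - 1 - t = s - (1 + t) by omega, Nat.cast_sub (by omega)]
          push_cast; ring
        rw [prod_congr rfl hc, prod_mul_distrib, prod_const, card_range,
          prod_cast_sub _ _ (by omega)]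
      rw [h1, h2, h3]
      have hd : ((s - 1 - t).descFactorial (i - 1) : ℚ) * ((s - i - t).factorial : ℚ)
          = ((s - 1 - t).factorial : ℚ) := by
        rw [← Nat.cast_mul, mul_comm, show s - i - t = (s - 1 - t) - (i - 1) by omega,
          Nat.factorial_mul_descFactorial (by omega)]
      have hsign : (-1 : ℚ) ^ (s - t) * (-1) ^ (s - i - t - 1) * (-1) ^ (i - 1) = 1 := by
        rw [← pow_add, ← pow_add, show s - t + (s - i - t - 1) + (i - 1) = 2 * (s - t - 1) by omega,
          pow_mul]
        norm_num
      have e1 : s - t - 1 = s - 1 - t := by omega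
      rw [e1]
      have f1 : ((t.factorial : ℚ)) ≠ 0 := Nat.cast_ne_zero.mpr (Nat.factorial_ne_zero _)
      have f2 : (((s - i - t - 1).factorial : ℚ)) ≠ 0 := Nat.cast_ne_zero.mpr (Nat.factorial_ne_zero _)
      have f3 : (((s - 1 - t).factorial : ℚ)) ≠ 0 := Nat.cast_ne_zero.mpr (Nat.factorial_ne_zero _)
      field_simp
      linear_combination ((-1 : ℚ) ^ (s - t) * (-1) ^ (s - i - t - 1) * (-1) ^ (i - 1)) * hd
        + (((s - 1 - t).factorial : ℚ)) * hsign
    · -- t > s - i : rising part vanishes, second sum has single term j = t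
      have hti : s - i < t := lt_of_le_of_ne hcase (fun e => htne e.symm)
      have hi2 : 2 ≤ i := by omega
      have hrise : ∏ r ∈ range (i - 1),
          ((Polynomial.X - Polynomial.C ((s : ℚ) - 1)).eval (t : ℚ) + (r : ℚ)) = 0 := by
        refine Finset.prod_eq_zero (Finset.mem_range.mpr (show s - 1 - t < i - 1 by omega)) ?_
        simp only [Polynomial.eval_sub, Polynomial.eval_X, Polynomial.eval_C]
        rw [show s - 1 - t = s - (1 + t) by omega, Nat.cast_sub (by omega)]
        push_cast; ring
      rw [hrise, mul_zero, zero_add]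
      have htmem : t ∈ Finset.Icc (s - i + 1) (s - 1) := Finset.mem_Icc.mpr (by omega)
      rw [Finset.sum_eq_single_of_mem t htmem ?off2]
      case off2 =>
        intro j hj hne
        obtain ⟨hj1, hj2⟩ := Finset.mem_Icc.mp hj
        rw [Polynomial.eval_mul, Polynomial.eval_mul]
        rcases Nat.lt_or_ge t j with h | h
        · have hz : (chooseP (Polynomial.X - Polynomial.C ((s : ℚ) - (i : ℚ) + 1))
              (i + j - s - 1)).eval (t : ℚ) = 0 := by
            rw [eval_chooseP]
            rw [Finset.prod_eq_zero (Finset.mem_range.mpr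
              (show t - (s - i) - 1 < i + j - s - 1 by omega)) ?_]
            · ring
            · simp only [Polynomial.eval_sub, Polynomial.eval_X, Polynomial.eval_C,
                Polynomial.eval_add]
              rw [show t - (s - i) - 1 = t - (s - i + 1) by omega, Nat.cast_sub (by omega)]
              push_cast [show i ≤ s from his]
              ring
          rw [hz]; ring
        · have hjt : j < t := lt_of_le_of_ne h (fun e => hne e)
          have hz : (chooseP (Polynomial.X - Polynomial.C ((j : ℚ) + 1))
              (s - j - 1)).eval (t : ℚ) = 0 := by
            rw [eval_chooseP]
            rw [Finset.prod_eq_zero (Finset.mem_range.mpr (show t - j - 1 < s - j - 1 by omega)) ?_]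
            · ring
            · simp only [Polynomial.eval_sub, Polynomial.eval_X, Polynomial.eval_C]
              rw [show t - j - 1 = t - (j + 1) by omega, Nat.cast_sub (by omega)]
              push_cast; ring
          rw [hz]; ring
      rw [Polynomial.eval_mul, Polynomial.eval_mul, Polynomial.eval_C,
        eval_chooseP, eval_chooseP]
      simp only [Polynomial.eval_sub, Polynomial.eval_X, Polynomial.eval_C]
      have h1 : ∏ r ∈ range (s - t - 1), ((t : ℚ) - ((t : ℚ) + 1) - r)
          = (-1) ^ (s - t - 1) * ((s - t - 1).factorial : ℚ) := by
        rw [← prod_neg_one_sub]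
        exact prod_congr rfl fun r _ => by ring
      have h2 : ∏ r ∈ range (i + t - s - 1), ((t : ℚ) - ((s : ℚ) - (i : ℚ) + 1) - r)
          = ((i + t - s - 1).factorial : ℚ) := by
        have hc : ∀ r ∈ range (i + t - s - 1), ((t : ℚ) - ((s : ℚ) - (i : ℚ) + 1) - r)
            = (((i + t - s - 1 : ℕ)) : ℚ) - r := by
          intro r _
          rw [show i + t - s - 1 = i + t - (s + 1) by omega, Nat.cast_sub (by omega)]
          push_cast; ring
        rw [prod_congr rfl hc, prod_cast_sub _ _ le_rfl, Nat.descFactorial_self]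
      have h3 : ∏ r ∈ range (s - i), ((t : ℚ) - r)
          = ((t.descFactorial (s - i) : ℕ) : ℚ) := prod_cast_sub t (s - i) (by omega)
      rw [h1, h2, h3]
      have hd : ((t.descFactorial (s - i) : ℚ)) * ((i + t - s).factorial : ℚ)
          = (t.factorial : ℚ) := by
        rw [← Nat.cast_mul, mul_comm, show i + t - s = t - (s - i) by omega,
          Nat.factorial_mul_descFactorial (by omega)]
      have hsign : (-1 : ℚ) ^ (s - t - 1) * (-1) ^ (s - t - 1) = 1 := by
        rw [← pow_add, show s - t - 1 + (s - t - 1) = 2 * (s - t - 1) by omega, pow_mul]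
        norm_num
      have f1 : ((t.factorial : ℚ)) ≠ 0 := Nat.cast_ne_zero.mpr (Nat.factorial_ne_zero _)
      have f2 : (((s - t - 1).factorial : ℚ)) ≠ 0 := Nat.cast_ne_zero.mpr (Nat.factorial_ne_zero _)
      have f3 : (((i + t - s - 1).factorial : ℚ)) ≠ 0 := Nat.cast_ne_zero.mpr (Nat.factorial_ne_zero _)
      have f4 : (((i + t - s).factorial : ℚ)) ≠ 0 := Nat.cast_ne_zero.mpr (Nat.factorial_ne_zero _)
      field_simp
      linear_combination ((-1 : ℚ) ^ (s - t - 1) * (-1) ^ (s - t - 1)) * hd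
        + ((t.factorial : ℚ)) * hsign

  have hdeg : R.natDegree ≤ s - 2 := by
    rw [hR]
    refine le_trans (Polynomial.natDegree_add_le _ _) (max_le ?_ ?_)
    · by_cases h : i = s
      · subst h; simp
      · refine le_trans (Polynomial.natDegree_mul_le) ?_
        have h1 : (∑ j ∈ Finset.range (s - i),
            Polynomial.C ((-1 : ℚ) ^ (s - j) * ((s - i - j).factorial : ℚ)
                / ((s - j - 1).factorial : ℚ))
              * chooseP Polynomial.X j
              * chooseP (Polynomial.X - Polynomial.C ((j : ℚ) + 1)) (s - i - j - 1)).natDegree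
            ≤ s - i - 1 := by
          refine Polynomial.natDegree_sum_le_of_forall_le _ _ fun j hj => ?_
          have hj' := mem_range.mp hj
          refine le_trans (Polynomial.natDegree_mul_le) ?_
          refine le_trans (add_le_add (le_trans (Polynomial.natDegree_mul_le)
            (add_le_add (le_of_eq (Polynomial.natDegree_C _))
              (natDegree_chooseP_le _ Polynomial.natDegree_X_le j)))
            (natDegree_chooseP_le _ (natDegree_XsubC_le _) _)) ?_
          omega
        refine le_trans (add_le_add h1
          (natDegree_risingP_le _ (natDegree_XsubC_le _) _)) ?_
        omega
    · by_cases h : i = 1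
      · subst h
        have : Finset.Icc (s - 1 + 1) (s - 1) = ∅ := by
          rw [Finset.Icc_eq_empty_iff]; omega
        simp [this]
      · refine le_trans (Polynomial.natDegree_mul_le) ?_
        have h1 : (∑ j ∈ Finset.Icc (s - i + 1) (s - 1),
            Polynomial.C ((-1 : ℚ) ^ (s - j - 1) * ((i + j - s).factorial : ℚ)
                / (j.factorial : ℚ))
              * chooseP (Polynomial.X - Polynomial.C ((j : ℚ) + 1)) (s - j - 1)
              * chooseP (Polynomial.X - Polynomial.C ((s : ℚ) - (i : ℚ) + 1))
                  (i + j - s - 1)).natDegree ≤ i - 2 := by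
          refine Polynomial.natDegree_sum_le_of_forall_le _ _ fun j hj => ?_
          have hj' := Finset.mem_Icc.mp hj
          refine le_trans (Polynomial.natDegree_mul_le) ?_
          refine le_trans (add_le_add (le_trans (Polynomial.natDegree_mul_le)
            (add_le_add (le_of_eq (Polynomial.natDegree_C _))
              (natDegree_chooseP_le _ (natDegree_XsubC_le _) _)))
            (natDegree_chooseP_le _ (natDegree_XsubC_le _) _)) ?_
          omega
        refine le_trans (add_le_add h1
          (natDegree_fallingP_le _ Polynomial.natDegree_X_le _)) ?_
        omega
  have hzero : R - 1 = 0 := by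
    refine Polynomial.eq_zero_of_natDegree_lt_card_of_eval_eq_zero' _
      (((range s).erase (s - i)).image (fun t : ℕ => (t : ℚ))) ?_ ?_
    · intro x hx
      obtain ⟨t, ht, rfl⟩ := Finset.mem_image.mp hx
      simp [main t ht]
    · rw [Finset.card_image_of_injective _ Nat.cast_injective,
        Finset.card_erase_of_mem (by simp; omega), Finset.card_range]
      refine lt_of_le_of_lt (le_trans (Polynomial.natDegree_sub_le _ _) ?_) (show s - 2 < s - 1 by omega)
      simpa using hdeg
  have := sub_eq_zero.mp hzero
  rw [this]
end

section
/- For natural numbers s ≥ 2, the following polynomial identity holds in Q[v,k]: 1 = Σ_{i=0}^{s-1} ( Σ_{j=i+1}^{s-1} ((-1)^{i+j} (j-i-1)!)/((s-i-1)!(j-1)!) · C(k-j-1, s-j-1) C(k-i-1, j-i-1) C(v-s, i) ) · (v-2s+1)^{rising (s-i-1)} (k-1)^{falling i} + Σ_{i=0}^{s-1} ( Σ_{j=1}^{i} ((-1)^{i+j} (i-j)!)/(i!(s-j-1)!) · C(k-j-1, i-j) C(k-1, j-1) C(v-s-i-1, s-i-1) ) · (v-s)^{falling i} (k-s+1)^{rising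 (s-i-1)}. -/
open MvPolynomial Finset

/-- Rising factorial `x(x+1)⋯(x+n-1)` in a commutative ring. -/
noncomputable def risingF {R : Type*} [CommRing R] (x : R) (n : ℕ) : R :=
  ∏ i ∈ Finset.range n, (x + (i : R))

/-- Falling factorial `x(x-1)⋯(x-n+1)` in a commutative ring. -/
noncomputable def fallingF {R : Type*} [CommRing R] (x : R) (n : ℕ) : R :=
  ∏ i ∈ Finset.range n, (x - (i : R))

/-- Generalized binomial coefficient `C(x, m) = x^{falling m} / m!` in a `ℚ`-algebra. -/
noncomputable def chooseF {R : Type*} [CommRing R] [Algebra ℚ R] (x : R) (m : ℕ) : R :=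
  algebraMap ℚ R ((m.factorial : ℚ)⁻¹) * fallingF x m

section maps
variable {R S : Type*} [CommRing R] [CommRing S]

lemma map_risingF (φ : R →+* S) (x : R) (n : ℕ) : φ (risingF x n) = risingF (φ x) n := by
  simp [risingF, map_prod]

lemma map_fallingF (φ : R →+* S) (x : R) (n : ℕ) : φ (fallingF x n) = fallingF (φ x) n := by
  simp [fallingF, map_prod]

lemma map_chooseF [Algebra ℚ R] [Algebra ℚ S] (φ : R →+* S)
    (hφ : ∀ q : ℚ, φ (algebraMap ℚ R q) = algebraMap ℚ S q) (x : R) (m : ℕ) :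
    φ (chooseF x m) = chooseF (φ x) m := by
  simp [chooseF, map_mul, hφ, map_fallingF]

end maps

section values

lemma fallingF_natCast_zero {a n : ℕ} (h : a < n) : fallingF (a : ℚ) n = 0 :=
  Finset.prod_eq_zero (Finset.mem_range.2 h) (by simp)

lemma fallingF_succ (x : ℚ) (n : ℕ) : fallingF x (n + 1) = fallingF x n * (x - n) := by
  simp [fallingF, Finset.prod_range_succ]

lemma fallingF_mul_factorial {a n : ℕ} (h : n ≤ a) :
    fallingF (a : ℚ) n * ((a - n).factorial : ℚ) = (a.factorial : ℚ) := by
  induction n with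
  | zero => simp [fallingF]
  | succ n ih =>
    have h' : n ≤ a := by omega
    have h2 : a - n = (a - (n + 1)) + 1 := by omega
    rw [fallingF_succ]
    have e1 : (a : ℚ) - n = ((a - n : ℕ) : ℚ) := by
      push_cast [Nat.cast_sub h']; ring
    calc fallingF (a:ℚ) n * ((a:ℚ) - n) * ((a - (n+1)).factorial : ℚ)
        = fallingF (a:ℚ) n * (((a - (n+1)).factorial : ℚ) * ((a - n : ℕ) : ℚ)) := by
          rw [e1]; ring
      _ = fallingF (a:ℚ) n * ((a - n).factorial : ℚ) := by
          rw [h2, Nat.factorial_succ]; push_cast; ring_nf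
      _ = (a.factorial : ℚ) := ih h'

lemma fallingF_natCast {a n : ℕ} (h : n ≤ a) :
    fallingF (a : ℚ) n = (a.factorial : ℚ) / ((a - n).factorial : ℚ) := by
  rw [eq_div_iff (by exact_mod_cast (a - n).factorial_ne_zero)]
  exact fallingF_mul_factorial h

lemma fallingF_self (a : ℕ) : fallingF (a : ℚ) a = (a.factorial : ℚ) := by
  simpa using fallingF_natCast (le_refl a)

lemma fallingF_neg_one (n : ℕ) : fallingF (-1 : ℚ) n = (-1) ^ n * (n.factorial : ℚ) := by
  have : ∀ i ∈ Finset.range n, (-1 : ℚ) - i = -1 * ((i : ℚ) + 1) := by intros; ring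
  rw [fallingF, Finset.prod_congr rfl this, Finset.prod_mul_distrib]
  simp only [Finset.prod_const, Finset.card_range]
  congr 1
  have := Finset.prod_range_add_one_eq_factorial n
  calc (∏ i ∈ Finset.range n, ((i : ℚ) + 1)) = ((∏ i ∈ Finset.range n, (i + 1) : ℕ) : ℚ) := by
        push_cast; ring
    _ = (n.factorial : ℚ) := by rw [this]

lemma risingF_eq_fallingF (x : ℚ) (n : ℕ) : risingF x n = (-1) ^ n * fallingF (-x) n := by
  have : ∀ i ∈ Finset.range n, x + (i : ℚ) = -1 * (-x - i) := by intros; ring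
  rw [risingF, Finset.prod_congr rfl this, Finset.prod_mul_distrib]
  simp [fallingF]

lemma chooseF_rat (x : ℚ) (m : ℕ) : chooseF x m = (m.factorial : ℚ)⁻¹ * fallingF x m := by
  simp [chooseF]

lemma chooseF_natCast_zero {a n : ℕ} (h : a < n) : chooseF (a : ℚ) n = 0 := by
  simp [chooseF_rat, fallingF_natCast_zero h]

lemma chooseF_self (a : ℕ) : chooseF (a : ℚ) a = 1 := by
  rw [chooseF_rat, fallingF_self, inv_mul_cancel₀]
  exact_mod_cast a.factorial_ne_zero

lemma chooseF_neg_one (n : ℕ) : chooseF (-1 : ℚ) n = (-1) ^ n := by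
  rw [chooseF_rat, fallingF_neg_one]
  field_simp

end values

lemma risingF_neg_natCast (a n : ℕ) : risingF (-(a:ℚ)) n = (-1)^n * fallingF (a:ℚ) n := by
  rw [risingF_eq_fallingF, neg_neg]

noncomputable def Fex (s : ℕ) (v k : ℚ) : ℚ :=
  (∑ i ∈ Finset.range s,
    (∑ j ∈ Finset.Icc (i + 1) (s - 1),
        ((-1 : ℚ) ^ (i + j) * ((j - i - 1).factorial : ℚ)
            / (((s - i - 1).factorial : ℚ) * ((j - 1).factorial : ℚ)))
          * chooseF (k - ((j : ℚ) + 1)) (s - j - 1)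
          * chooseF (k - ((i : ℚ) + 1)) (j - i - 1)
          * chooseF (v - (s : ℚ)) i)
      * risingF (v - (2 * (s : ℚ) - 1)) (s - i - 1)
      * fallingF (k - 1) i)
  + (∑ i ∈ Finset.range s,
    (∑ j ∈ Finset.Icc 1 i,
        ((-1 : ℚ) ^ (i + j) * ((i - j).factorial : ℚ)
            / ((i.factorial : ℚ) * ((s - j - 1).factorial : ℚ)))
          * chooseF (k - ((j : ℚ) + 1)) (i - j)
          * chooseF (k - 1) (j - 1)
          * chooseF (v - ((s : ℚ) + (i : ℚ) + 1)) (s - i - 1))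
      * fallingF (v - (s : ℚ)) i
      * risingF (k - ((s : ℚ) - 1)) (s - i - 1))

lemma lemB (s m t : ℕ) (hs : 2 ≤ s) (hm : m < s) (ht1 : 1 ≤ t) (ht2 : t ≤ s - 1) :
    Fex s ((s : ℚ) + m) (t : ℚ) = 1 := by
  rw [Fex]
  by_cases htm : t ≤ m
  · -- case t ≤ m : first sum is 0, second sum collapses to i = m, j = t
    rw [Finset.sum_eq_zero (f := fun i =>
        (∑ j ∈ Finset.Icc (i + 1) (s - 1), _) * _ * _), zero_add]
    · rw [Finset.sum_eq_single_of_mem m (Finset.mem_range.2 hm)]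
      · rw [Finset.sum_eq_single_of_mem t (Finset.mem_Icc.2 ⟨ht1, htm⟩)]
        · -- the surviving term
          have e1 : (t:ℚ) - ((t:ℚ)+1) = -1 := by ring
          have e2 : (t:ℚ) - 1 = ((t-1 : ℕ) : ℚ) := by
            rw [Nat.cast_sub ht1]; push_cast; ring
          have e3 : (s:ℚ) + m - ((s:ℚ) + (m:ℚ) + 1) = -1 := by ring
          have e4 : (s:ℚ) + m - (s:ℚ) = ((m:ℕ):ℚ) := by push_cast; ring
          have e5 : (t:ℚ) - ((s:ℚ) - 1) = -(((s-1-t : ℕ)) : ℚ) := by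
            rw [Nat.cast_sub (by omega), Nat.cast_sub (by omega)]; push_cast; ring
          rw [e1, e2, e3, e4, e5, chooseF_neg_one, chooseF_self, chooseF_neg_one,
            fallingF_self, risingF_neg_natCast,
            fallingF_natCast (by omega : s - m - 1 ≤ s - 1 - t)]
          have hind : s - 1 - t - (s - m - 1) = m - t := by omega
          have hind2 : s - t - 1 = s - 1 - t := by omega
          rw [hind, hind2]
          have hsign : ((-1:ℚ))^m * ((-1:ℚ))^t * ((-1:ℚ))^(m-t) * ((-1:ℚ))^((s-m-1)*2) = 1 := by
            rw [← pow_add, ← pow_add, ← pow_add,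
              (by omega : m + t + (m-t) + (s-m-1)*2 = 2*(s-1)), pow_mul]
            norm_num
          have f1 : ((m.factorial : ℚ)) ≠ 0 := by exact_mod_cast m.factorial_ne_zero
          have f2 : (((s-1-t).factorial : ℚ)) ≠ 0 := by exact_mod_cast (s-1-t).factorial_ne_zero
          have f3 : (((m-t).factorial : ℚ)) ≠ 0 := by exact_mod_cast (m-t).factorial_ne_zero
          field_simp
          linear_combination hsign
        · -- other j in the second inner sum vanish
          intro j hj hjt
          rw [Finset.mem_Icc] at hj
          rcases lt_or_gt_of_ne hjt with hlt | hgt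
          · -- j < t : chooseF (t - (j+1)) (m - j) = 0
            have e : (t:ℚ) - ((j:ℚ)+1) = ((t - j - 1 : ℕ) : ℚ) := by
              rw [Nat.cast_sub (by omega), Nat.cast_sub (by omega)]; push_cast; ring
            rw [e, chooseF_natCast_zero (by omega)]
            ring
          · -- j > t : chooseF (t - 1) (j - 1) = 0
            have e : (t:ℚ) - 1 = ((t - 1 : ℕ) : ℚ) := by
              rw [Nat.cast_sub ht1]; push_cast; ring
            rw [e, chooseF_natCast_zero (by omega)]
            ring
      · -- other i in the second outer sum vanish
        intro i hi him
        rw [Finset.mem_range] at hi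
        rcases lt_or_gt_of_ne him with hlt | hgt
        · -- i < m : chooseF (v - (s+i+1)) (s-i-1) = 0 in every inner term
          have e : (s:ℚ) + m - ((s:ℚ) + (i:ℚ) + 1) = ((m - i - 1 : ℕ) : ℚ) := by
            rw [Nat.cast_sub (by omega), Nat.cast_sub (by omega)]; push_cast; ring
          rw [Finset.sum_eq_zero, zero_mul, zero_mul]
          intro j hj
          rw [e, chooseF_natCast_zero (by omega)]
          ring
        · -- i > m : fallingF (v - s) i = 0
          have e : (s:ℚ) + m - (s:ℚ) = ((m:ℕ):ℚ) := by push_cast; ring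
          rw [e, fallingF_natCast_zero (by omega)]
          ring
    · -- first sum vanishes termwise
      intro i hi
      rw [Finset.mem_range] at hi
      by_cases him : i < m
      · -- rising factor vanishes
        have e : (s:ℚ) + m - (2*(s:ℚ) - 1) = -(((s - 1 - m : ℕ)) : ℚ) := by
          rw [Nat.cast_sub (by omega), Nat.cast_sub (by omega)]; push_cast; ring
        rw [e, risingF_neg_natCast, fallingF_natCast_zero (by omega)]
        ring
      · -- i ≥ m ≥ t : fallingF (k-1) i = 0
        have e : (t:ℚ) - 1 = ((t - 1 : ℕ) : ℚ) := by
          rw [Nat.cast_sub ht1]; push_cast; ring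
        rw [e, fallingF_natCast_zero (by omega)]
        ring
  · -- case t > m : second sum is 0, first sum collapses to i = m, j = t
    push_neg at htm
    rw [Finset.sum_eq_zero (f := fun i =>
        (∑ j ∈ Finset.Icc 1 i, _) * _ * _), add_zero]
    · rw [Finset.sum_eq_single_of_mem m (Finset.mem_range.2 hm)]
      · rw [Finset.sum_eq_single_of_mem t (Finset.mem_Icc.2 ⟨by omega, ht2⟩)]
        · have e1 : (t:ℚ) - ((t:ℚ)+1) = -1 := by ring
          have e2 : (t:ℚ) - ((m:ℚ)+1) = ((t - m - 1 : ℕ) : ℚ) := by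
            rw [Nat.cast_sub (by omega), Nat.cast_sub (by omega)]; push_cast; ring
          have e3 : (s:ℚ) + m - (s:ℚ) = ((m:ℕ):ℚ) := by push_cast; ring
          have e4 : (s:ℚ) + m - (2*(s:ℚ) - 1) = -(((s - m - 1 : ℕ)) : ℚ) := by
            rw [Nat.cast_sub (by omega), Nat.cast_sub (by omega)]; push_cast; ring
          have e5 : (t:ℚ) - 1 = ((t - 1 : ℕ) : ℚ) := by
            rw [Nat.cast_sub ht1]; push_cast; ring
          rw [e1, e2, e3, e4, e5, chooseF_neg_one, chooseF_self, chooseF_self,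
            risingF_neg_natCast, fallingF_self,
            fallingF_natCast (by omega : m ≤ t - 1)]
          have hind : t - 1 - m = t - m - 1 := by omega
          rw [hind]
          have hsign : ((-1:ℚ))^m * ((-1:ℚ))^t * ((-1:ℚ))^(s-t-1) * ((-1:ℚ))^(s-m-1) = 1 := by
            rw [← pow_add, ← pow_add, ← pow_add,
              (by omega : m + t + (s-t-1) + (s-m-1) = 2*(s-1)), pow_mul]
            norm_num
          have f1 : (((s-m-1).factorial : ℚ)) ≠ 0 := by exact_mod_cast (s-m-1).factorial_ne_zero
          have f2 : (((t-1).factorial : ℚ)) ≠ 0 := by exact_mod_cast (t-1).factorial_ne_zero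
          have f3 : (((t-m-1).factorial : ℚ)) ≠ 0 := by exact_mod_cast (t-m-1).factorial_ne_zero
          field_simp
          linear_combination hsign
        · intro j hj hjt
          rw [Finset.mem_Icc] at hj
          rcases lt_or_gt_of_ne hjt with hlt | hgt
          · -- j < t : chooseF (t - (j+1)) (s - j - 1) = 0
            have e : (t:ℚ) - ((j:ℚ)+1) = ((t - j - 1 : ℕ) : ℚ) := by
              rw [Nat.cast_sub (by omega), Nat.cast_sub (by omega)]; push_cast; ring
            rw [e, chooseF_natCast_zero (by omega)]
            ring
          · -- j > t : chooseF (t - (m+1)) (j - m - 1) = 0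
            have e : (t:ℚ) - ((m:ℚ)+1) = ((t - m - 1 : ℕ) : ℚ) := by
              rw [Nat.cast_sub (by omega), Nat.cast_sub (by omega)]; push_cast; ring
            rw [e, chooseF_natCast_zero (by omega)]
            ring
      · intro i hi him
        rw [Finset.mem_range] at hi
        rcases lt_or_gt_of_ne him with hlt | hgt
        · -- i < m : rising factor vanishes
          have e : (s:ℚ) + m - (2*(s:ℚ) - 1) = -(((s - 1 - m : ℕ)) : ℚ) := by
            rw [Nat.cast_sub (by omega), Nat.cast_sub (by omega)]; push_cast; ring
          rw [e, risingF_neg_natCast, fallingF_natCast_zero (by omega)]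
          ring
        · -- i > m : chooseF (v - s) i = 0 in every inner term
          have e : (s:ℚ) + m - (s:ℚ) = ((m:ℕ):ℚ) := by push_cast; ring
          rw [Finset.sum_eq_zero, zero_mul, zero_mul]
          intro j hj
          rw [e, chooseF_natCast_zero (by omega)]
          ring
    · -- second sum vanishes termwise
      intro i hi
      rw [Finset.mem_range] at hi
      rcases lt_trichotomy i m with hlt | heq | hgt
      · have e : (s:ℚ) + m - ((s:ℚ) + (i:ℚ) + 1) = ((m - i - 1 : ℕ) : ℚ) := by
          rw [Nat.cast_sub (by omega), Nat.cast_sub (by omega)]; push_cast; ring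
        rw [Finset.sum_eq_zero, zero_mul, zero_mul]
        intro j hj
        rw [e, chooseF_natCast_zero (by omega)]
        ring
      · subst heq
        have e : (t:ℚ) - ((s:ℚ) - 1) = -(((s - 1 - t : ℕ)) : ℚ) := by
          rw [Nat.cast_sub (by omega), Nat.cast_sub (by omega)]; push_cast; ring
        rw [e, risingF_neg_natCast, fallingF_natCast_zero (by omega)]
        ring
      · have e : (s:ℚ) + m - (s:ℚ) = ((m:ℕ):ℚ) := by push_cast; ring
        rw [e, fallingF_natCast_zero (by omega)]
        ring

section degree
open Polynomial

lemma natDegree_fallingF_le (p : Polynomial ℚ) (hp : p.natDegree ≤ 1) (n : ℕ) :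
    (fallingF p n).natDegree ≤ n := by
  refine le_trans (Polynomial.natDegree_prod_le _ _) ?_
  refine le_trans (Finset.sum_le_sum (g := fun _ => 1) fun i _ => ?_) (by simp)
  exact le_trans (Polynomial.natDegree_sub_le _ _)
    (max_le hp (le_trans (le_of_eq (Polynomial.natDegree_natCast i)) (by norm_num)))

lemma natDegree_risingF_le (p : Polynomial ℚ) (hp : p.natDegree ≤ 1) (n : ℕ) :
    (risingF p n).natDegree ≤ n := by
  refine le_trans (Polynomial.natDegree_prod_le _ _) ?_
  refine le_trans (Finset.sum_le_sum (g := fun _ => 1) fun i _ => ?_) (by simp)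
  exact le_trans (Polynomial.natDegree_add_le _ _)
    (max_le hp (le_trans (le_of_eq (Polynomial.natDegree_natCast i)) (by norm_num)))

lemma natDegree_chooseF_le (p : Polynomial ℚ) (hp : p.natDegree ≤ 1) (m : ℕ) :
    (chooseF p m).natDegree ≤ m := by
  rw [chooseF, Polynomial.algebraMap_eq]
  exact le_trans (Polynomial.natDegree_C_mul_le _ _) (natDegree_fallingF_le p hp m)

lemma natDegree_X_sub_C_le (c : ℚ) : (Polynomial.X - Polynomial.C c).natDegree ≤ 1 :=
  le_of_eq (Polynomial.natDegree_X_sub_C c)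

lemma eval_eq_one_of_interp (p : Polynomial ℚ) (n : ℕ) (hd : p.natDegree < n)
    (S : Finset ℚ) (hcard : n ≤ S.card) (h : ∀ x ∈ S, p.eval x = 1) (y : ℚ) :
    p.eval y = 1 := by
  have hz : p - 1 = 0 := by
    apply Polynomial.eq_zero_of_natDegree_lt_card_of_eval_eq_zero' (p - 1) S
    · intro x hx
      simp [h x hx]
    · refine lt_of_le_of_lt (le_trans (Polynomial.natDegree_sub_le _ _) ?_) (lt_of_lt_of_le hd hcard)
      simp
  have : p = 1 := by linear_combination hz
  simp [this]

end degree

section evals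
open Polynomial

lemma peval_risingF (p : Polynomial ℚ) (x : ℚ) (n : ℕ) :
    (risingF p n).eval x = risingF (p.eval x) n := by
  simpa using map_risingF (Polynomial.evalRingHom x) p n

lemma peval_fallingF (p : Polynomial ℚ) (x : ℚ) (n : ℕ) :
    (fallingF p n).eval x = fallingF (p.eval x) n := by
  simpa using map_fallingF (Polynomial.evalRingHom x) p n

lemma peval_chooseF (p : Polynomial ℚ) (x : ℚ) (m : ℕ) :
    (chooseF p m).eval x = chooseF (p.eval x) m := by
  simpa using map_chooseF (Polynomial.evalRingHom x)
    (fun q => by simp [Polynomial.algebraMap_eq]) p m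

end evals

noncomputable def Qk (s m : ℕ) : Polynomial ℚ :=
  (∑ i ∈ Finset.range s,
    (∑ j ∈ Finset.Icc (i + 1) (s - 1),
        Polynomial.C ((-1 : ℚ) ^ (i + j) * ((j - i - 1).factorial : ℚ)
            / (((s - i - 1).factorial : ℚ) * ((j - 1).factorial : ℚ)))
          * chooseF (Polynomial.X - Polynomial.C ((j : ℚ) + 1)) (s - j - 1)
          * chooseF (Polynomial.X - Polynomial.C ((i : ℚ) + 1)) (j - i - 1)
          * Polynomial.C (chooseF ((s : ℚ) + m - (s : ℚ)) i))
      * Polynomial.C (risingF ((s : ℚ) + m - (2 * (s : ℚ) - 1)) (s - i - 1))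
      * fallingF (Polynomial.X - Polynomial.C 1) i)
  + (∑ i ∈ Finset.range s,
    (∑ j ∈ Finset.Icc 1 i,
        Polynomial.C ((-1 : ℚ) ^ (i + j) * ((i - j).factorial : ℚ)
            / ((i.factorial : ℚ) * ((s - j - 1).factorial : ℚ)))
          * chooseF (Polynomial.X - Polynomial.C ((j : ℚ) + 1)) (i - j)
          * chooseF (Polynomial.X - Polynomial.C 1) (j - 1)
          * Polynomial.C (chooseF ((s : ℚ) + m - ((s : ℚ) + (i : ℚ) + 1)) (s - i - 1)))
      * Polynomial.C (fallingF ((s : ℚ) + m - (s : ℚ)) i)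
      * risingF (Polynomial.X - Polynomial.C ((s : ℚ) - 1)) (s - i - 1))

lemma eval_Qk (s m : ℕ) (k : ℚ) : (Qk s m).eval k = Fex s ((s : ℚ) + m) k := by
  simp [Qk, Fex, Polynomial.eval_finset_sum, peval_risingF, peval_fallingF, peval_chooseF]

lemma natDegree_Qk_le (s m : ℕ) (hs : 2 ≤ s) : (Qk s m).natDegree ≤ s - 2 := by
  refine le_trans (Polynomial.natDegree_add_le _ _) (max_le ?_ ?_)
  · refine Polynomial.natDegree_sum_le_of_forall_le _ _ fun i hi => ?_
    rw [Finset.mem_range] at hi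
    by_cases hi' : i = s - 1
    · have : Finset.Icc (i + 1) (s - 1) = ∅ := by
        rw [Finset.Icc_eq_empty_iff]; omega
      rw [this, Finset.sum_empty, zero_mul, zero_mul]
      simp
    · refine le_trans Polynomial.natDegree_mul_le (le_trans (add_le_add
        (le_trans Polynomial.natDegree_mul_le (add_le_add
          (Polynomial.natDegree_sum_le_of_forall_le _ _ fun j hj => ?_)
          (le_of_eq (Polynomial.natDegree_C _))))
        (natDegree_fallingF_le _ (natDegree_X_sub_C_le _) i)) (by omega : s - 2 - i + 0 + i ≤ s - 2))
      rw [Finset.mem_Icc] at hj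
      refine le_trans Polynomial.natDegree_mul_le (le_trans (add_le_add
        (le_trans Polynomial.natDegree_mul_le (add_le_add
          (le_trans Polynomial.natDegree_mul_le (add_le_add
            (le_of_eq (Polynomial.natDegree_C _))
            (natDegree_chooseF_le _ (natDegree_X_sub_C_le _) _)))
          (natDegree_chooseF_le _ (natDegree_X_sub_C_le _) _)))
        (le_of_eq (Polynomial.natDegree_C _))) ?_)
      omega
  · refine Polynomial.natDegree_sum_le_of_forall_le _ _ fun i hi => ?_
    rw [Finset.mem_range] at hi
    by_cases hi' : i = 0
    · have : Finset.Icc 1 i = ∅ := by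
        rw [Finset.Icc_eq_empty_iff]; omega
      rw [this, Finset.sum_empty, zero_mul, zero_mul]
      simp
    · refine le_trans Polynomial.natDegree_mul_le (le_trans (add_le_add
        (le_trans Polynomial.natDegree_mul_le (add_le_add
          (Polynomial.natDegree_sum_le_of_forall_le _ _ fun j hj => ?_)
          (le_of_eq (Polynomial.natDegree_C _))))
        (natDegree_risingF_le _ (natDegree_X_sub_C_le _) _))
        (by omega : i - 1 + 0 + (s - i - 1) ≤ s - 2))
      rw [Finset.mem_Icc] at hj
      refine le_trans Polynomial.natDegree_mul_le (le_trans (add_le_add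
        (le_trans Polynomial.natDegree_mul_le (add_le_add
          (le_trans Polynomial.natDegree_mul_le (add_le_add
            (le_of_eq (Polynomial.natDegree_C _))
            (natDegree_chooseF_le _ (natDegree_X_sub_C_le _) _)))
          (natDegree_chooseF_le _ (natDegree_X_sub_C_le _) _)))
        (le_of_eq (Polynomial.natDegree_C _))) ?_)
      omega

lemma lemA (s m : ℕ) (hs : 2 ≤ s) (hm : m < s) (k : ℚ) : Fex s ((s : ℚ) + m) k = 1 := by
  rw [← eval_Qk]
  refine eval_eq_one_of_interp _ (s - 1) ?_ ((Finset.Icc 1 (s - 1)).image (Nat.cast : ℕ → ℚ))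
    ?_ ?_ k
  · exact lt_of_le_of_lt (natDegree_Qk_le s m hs) (by omega)
  · rw [Finset.card_image_of_injective _ Nat.cast_injective, Nat.card_Icc]; omega
  · intro x hx
    rw [Finset.mem_image] at hx
    obtain ⟨t, ht, rfl⟩ := hx
    rw [Finset.mem_Icc] at ht
    rw [eval_Qk]
    exact lemB s m t hs hm ht.1 ht.2

noncomputable def Pv (s : ℕ) (k : ℚ) : Polynomial ℚ :=
  (∑ i ∈ Finset.range s,
    (∑ j ∈ Finset.Icc (i + 1) (s - 1),
        Polynomial.C ((-1 : ℚ) ^ (i + j) * ((j - i - 1).factorial : ℚ)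
            / (((s - i - 1).factorial : ℚ) * ((j - 1).factorial : ℚ)))
          * Polynomial.C (chooseF (k - ((j : ℚ) + 1)) (s - j - 1))
          * Polynomial.C (chooseF (k - ((i : ℚ) + 1)) (j - i - 1))
          * chooseF (Polynomial.X - Polynomial.C (s : ℚ)) i)
      * risingF (Polynomial.X - Polynomial.C (2 * (s : ℚ) - 1)) (s - i - 1)
      * Polynomial.C (fallingF (k - 1) i))
  + (∑ i ∈ Finset.range s,
    (∑ j ∈ Finset.Icc 1 i,
        Polynomial.C ((-1 : ℚ) ^ (i + j) * ((i - j).factorial : ℚ)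
            / ((i.factorial : ℚ) * ((s - j - 1).factorial : ℚ)))
          * Polynomial.C (chooseF (k - ((j : ℚ) + 1)) (i - j))
          * Polynomial.C (chooseF (k - 1) (j - 1))
          * chooseF (Polynomial.X - Polynomial.C ((s : ℚ) + (i : ℚ) + 1)) (s - i - 1))
      * fallingF (Polynomial.X - Polynomial.C (s : ℚ)) i
      * Polynomial.C (risingF (k - ((s : ℚ) - 1)) (s - i - 1)))

lemma eval_Pv (s : ℕ) (k v : ℚ) : (Pv s k).eval v = Fex s v k := by
  simp [Pv, Fex, Polynomial.eval_finset_sum, peval_risingF, peval_fallingF, peval_chooseF]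

lemma natDegree_Pv_le (s : ℕ) (k : ℚ) : (Pv s k).natDegree ≤ s - 1 := by
  refine le_trans (Polynomial.natDegree_add_le _ _) (max_le ?_ ?_)
  · refine Polynomial.natDegree_sum_le_of_forall_le _ _ fun i hi => ?_
    rw [Finset.mem_range] at hi
    refine le_trans Polynomial.natDegree_mul_le (le_trans (add_le_add
      (le_trans Polynomial.natDegree_mul_le (add_le_add
        (Polynomial.natDegree_sum_le_of_forall_le _ _ fun j hj => ?_)
        (natDegree_risingF_le _ (natDegree_X_sub_C_le _) _)))
      (le_of_eq (Polynomial.natDegree_C _))) (by omega : i + (s - i - 1) + 0 ≤ s - 1))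
    refine le_trans Polynomial.natDegree_mul_le (le_trans (add_le_add
      (le_trans Polynomial.natDegree_mul_le (add_le_add
        (le_trans Polynomial.natDegree_mul_le (add_le_add
          (le_of_eq (Polynomial.natDegree_C _))
          (le_of_eq (Polynomial.natDegree_C _))))
        (le_of_eq (Polynomial.natDegree_C _))))
      (natDegree_chooseF_le _ (natDegree_X_sub_C_le _) _)) ?_)
    omega
  · refine Polynomial.natDegree_sum_le_of_forall_le _ _ fun i hi => ?_
    rw [Finset.mem_range] at hi
    refine le_trans Polynomial.natDegree_mul_le (le_trans (add_le_add
      (le_trans Polynomial.natDegree_mul_le (add_le_add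
        (Polynomial.natDegree_sum_le_of_forall_le _ _ fun j hj => ?_)
        (natDegree_fallingF_le _ (natDegree_X_sub_C_le _) i)))
      (le_of_eq (Polynomial.natDegree_C _))) (by omega : s - i - 1 + i + 0 ≤ s - 1))
    refine le_trans Polynomial.natDegree_mul_le (le_trans (add_le_add
      (le_trans Polynomial.natDegree_mul_le (add_le_add
        (le_trans Polynomial.natDegree_mul_le (add_le_add
          (le_of_eq (Polynomial.natDegree_C _))
          (le_of_eq (Polynomial.natDegree_C _))))
        (le_of_eq (Polynomial.natDegree_C _))))
      (natDegree_chooseF_le _ (natDegree_X_sub_C_le _) _)) ?_)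
    omega

lemma lemV (s : ℕ) (hs : 2 ≤ s) (v k : ℚ) : Fex s v k = 1 := by
  rw [← eval_Pv]
  refine eval_eq_one_of_interp _ s ?_
    ((Finset.range s).image (fun m : ℕ => ((s : ℚ) + m))) ?_ ?_ v
  · exact lt_of_le_of_lt (natDegree_Pv_le s k) (by omega)
  · rw [Finset.card_image_of_injective _ (fun a b h => by
      exact_mod_cast add_left_cancel h : Function.Injective (fun m : ℕ => ((s : ℚ) + m)))]
    simp
  · intro x hx
    rw [Finset.mem_image] at hx
    obtain ⟨mm, hmm, rfl⟩ := hx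
    rw [Finset.mem_range] at hmm
    rw [eval_Pv]
    exact lemA s mm hs hmm k

lemma mv_eval_risingF (x : Fin 2 → ℚ) (p : MvPolynomial (Fin 2) ℚ) (n : ℕ) :
    eval x (risingF p n) = risingF (eval x p) n :=
  map_risingF (eval x) p n

lemma mv_eval_fallingF (x : Fin 2 → ℚ) (p : MvPolynomial (Fin 2) ℚ) (n : ℕ) :
    eval x (fallingF p n) = fallingF (eval x p) n :=
  map_fallingF (eval x) p n

lemma mv_eval_chooseF (x : Fin 2 → ℚ) (p : MvPolynomial (Fin 2) ℚ) (m : ℕ) :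
    eval x (chooseF p m) = chooseF (eval x p) m :=
  map_chooseF (eval x) (fun q => by simp [MvPolynomial.algebraMap_eq]) p m


/-- The bivariate polynomial identity (eq:logopedia) in `ℚ[v, k]`,
where `v = X 0` and `k = X 1`. -/
theorem logopedia_identity (s : ℕ) (hs : 2 ≤ s) :
    (1 : MvPolynomial (Fin 2) ℚ) =
      (∑ i ∈ Finset.range s,
        (∑ j ∈ Finset.Icc (i + 1) (s - 1),
            algebraMap ℚ (MvPolynomial (Fin 2) ℚ)
                ((-1 : ℚ) ^ (i + j) * ((j - i - 1).factorial : ℚ)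
                  / (((s - i - 1).factorial : ℚ) * ((j - 1).factorial : ℚ)))
              * chooseF (X 1 - MvPolynomial.C ((j : ℚ) + 1)) (s - j - 1)
              * chooseF (X 1 - MvPolynomial.C ((i : ℚ) + 1)) (j - i - 1)
              * chooseF (X 0 - MvPolynomial.C (s : ℚ)) i)
          * risingF (X 0 - MvPolynomial.C (2 * (s : ℚ) - 1)) (s - i - 1)
          * fallingF (X 1 - MvPolynomial.C 1) i)
      + (∑ i ∈ Finset.range s,
        (∑ j ∈ Finset.Icc 1 i,
            algebraMap ℚ (MvPolynomial (Fin 2) ℚ)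
                ((-1 : ℚ) ^ (i + j) * ((i - j).factorial : ℚ)
                  / ((i.factorial : ℚ) * ((s - j - 1).factorial : ℚ)))
              * chooseF (X 1 - MvPolynomial.C ((j : ℚ) + 1)) (i - j)
              * chooseF (X 1 - MvPolynomial.C 1) (j - 1)
              * chooseF (X 0 - MvPolynomial.C ((s : ℚ) + (i : ℚ) + 1)) (s - i - 1))
          * fallingF (X 0 - MvPolynomial.C (s : ℚ)) i
          * risingF (X 1 - MvPolynomial.C ((s : ℚ) - 1)) (s - i - 1)) := by
  refine MvPolynomial.funext fun x => ?_
  have h := lemV s hs (x 0) (x 1)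
  rw [Fex] at h
  simp only [map_one, map_add, map_sum, map_mul, mv_eval_risingF, mv_eval_fallingF,
    mv_eval_chooseF, map_sub, eval_X, eval_C, MvPolynomial.algebraMap_eq, map_ofNat]
  exact h.symm
end

section
/- Lower bound for the prime-gap threshold: define ρ_s as the smallest positive integer n such that the interval (n, n+s-1] contains no primes. Assume (Dusart's theorem) that for every real x ≥ 468,991,632 there exists a prime in (x, x + x/(5000 (ln x)^2)], and assume ρ_{288} = 1,294,268,491. Then for every s ≥ 288, ρ_s > 5000·s·(14.6 + ln s)^2, and in particular ρ_s > 2,000,000·s. -/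
open Real

/-- `ρ s` is the smallest positive integer `n` such that the interval `(n, n+s-1]`
contains no primes. -/
noncomputable def rho (s : ℕ) : ℕ :=
  sInf {n : ℕ | 0 < n ∧ ∀ p : ℕ, n < p → p ≤ n + s - 1 → ¬ p.Prime}

/-- Generic tool: to show `num/den < log b`, compare `e^num` with `b^den`. -/
lemma lt_log_of_pow_lt (num den : ℕ) (b : ℝ) (hden : den ≠ 0) (hb : 0 < b)
    (h : (2.7182818286 : ℝ) ^ num < b ^ den) :
    (num : ℝ) / den < Real.log b := by
  rw [Real.lt_log_iff_exp_lt hb]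
  have h1 : Real.exp ((num : ℝ) / den) ^ den = Real.exp num := by
    rw [← Real.exp_nat_mul]
    congr 1
    field_simp
  have h2 : Real.exp (num : ℝ) = Real.exp 1 ^ num := by
    rw [← Real.exp_nat_mul, mul_one]
  have h3 : Real.exp 1 ^ num ≤ (2.7182818286 : ℝ) ^ num :=
    pow_le_pow_left₀ (Real.exp_pos 1).le Real.exp_one_lt_d9.le num
  have h4 : Real.exp ((num : ℝ) / den) ^ den < b ^ den := by
    rw [h1, h2]; exact lt_of_le_of_lt h3 h
  exact lt_of_pow_lt_pow_left₀ den hb.le h4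

lemma log_5000 : (8.516 : ℝ) < Real.log 5000 := by
  have := lt_log_of_pow_lt 2129 250 5000 (by norm_num) (by norm_num) (by
    rw [show (2129:ℕ) = 16 * 133 + 1 by norm_num, pow_succ, pow_mul]; norm_num)
  calc (8.516 : ℝ) = 2129 / 250 := by norm_num
  _ < _ := this

lemma log_rho288 : (20.97 : ℝ) < Real.log 1294268491 := by
  have := lt_log_of_pow_lt 2097 100 1294268491 (by norm_num) (by norm_num) (by
    rw [show (2097:ℕ) = 16 * 131 + 1 by norm_num, pow_succ, pow_mul]; norm_num)
  calc (20.97 : ℝ) = 2097 / 100 := by norm_num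
  _ < _ := this

lemma log_2097e2 : (213 : ℝ) / 70 < Real.log 20.97 := by
  have := lt_log_of_pow_lt 213 70 20.97 (by norm_num) (by norm_num) (by norm_num)
  exact_mod_cast this

lemma log_288 : (5.4 : ℝ) < Real.log 288 := by
  have := lt_log_of_pow_lt 27 5 288 (by norm_num) (by norm_num) (by norm_num)
  calc (5.4 : ℝ) = 27 / 5 := by norm_num
  _ < _ := this

lemma rho_mem (s : ℕ) (hs : 1 ≤ s) :
    0 < rho s ∧ ∀ p : ℕ, rho s < p → p ≤ rho s + s - 1 → ¬ p.Prime := by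
  have hne : {n : ℕ | 0 < n ∧ ∀ p : ℕ, n < p → p ≤ n + s - 1 → ¬ p.Prime}.Nonempty := by
    refine ⟨s.factorial + 1, Nat.succ_pos _, ?_⟩
    intro p hp1 hp2 hpp
    have hfac : 0 < s.factorial := Nat.factorial_pos s
    have hsf : s ≤ s.factorial := Nat.self_le_factorial s
    have hk1 : 2 ≤ p - s.factorial := by omega
    have hk2 : p - s.factorial ≤ s := by omega
    have hd : (p - s.factorial) ∣ s.factorial := Nat.dvd_factorial (by omega) hk2
    have hdp : (p - s.factorial) ∣ p := by
      have hpe : p = s.factorial + (p - s.factorial) := by omega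
      calc (p - s.factorial) ∣ s.factorial + (p - s.factorial) := dvd_add hd dvd_rfl
      _ = p := hpe.symm
    rcases hpp.eq_one_or_self_of_dvd _ hdp with h | h
    · omega
    · omega
  exact Nat.sInf_mem hne

lemma rho_mono (s : ℕ) (hs : 288 ≤ s) : rho 288 ≤ rho s := by
  obtain ⟨h0, h1⟩ := rho_mem s (by omega)
  exact Nat.sInf_le ⟨h0, fun p hp hp2 => h1 p hp (by omega)⟩

/-- Lower bound for `ρ_s` (Proposition, Section 5), assuming Dusart's prime gap
bound and the known value `ρ_288 = 1294268491`. -/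
theorem rho_lower_bound
    (dusart : ∀ x : ℝ, 468991632 ≤ x →
      ∃ p : ℕ, p.Prime ∧ (x : ℝ) < p ∧ (p : ℝ) ≤ x + x / (5000 * (Real.log x) ^ 2))
    (h288 : rho 288 = 1294268491) :
    ∀ s : ℕ, 288 ≤ s →
      5000 * (s : ℝ) * (14.6 + Real.log s) ^ 2 < (rho s : ℝ) ∧
      2000000 * (s : ℝ) < (rho s : ℝ) := by
  intro s hs
  obtain ⟨hn0, hnoprime⟩ := rho_mem s (by omega)
  set n := rho s with hn
  have hge : 1294268491 ≤ n := h288 ▸ rho_mono s hs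
  have hnR : (1294268491 : ℝ) ≤ (n : ℝ) := by exact_mod_cast hge
  set L := Real.log n with hLdef
  have hL : (20.97 : ℝ) < L :=
    lt_of_lt_of_le log_rho288 (Real.log_le_log (by norm_num) hnR)
  have hL0 : (0 : ℝ) < L := by linarith
  obtain ⟨p, hp, hlt, hle⟩ := dusart n (by linarith)
  have hpn : n < p := by exact_mod_cast hlt
  have hps : n + s ≤ p := by
    by_contra hcon
    exact hnoprime p hpn (by omega) hp
  have hkey0 : (n : ℝ) + s ≤ (n : ℝ) + (n : ℝ) / (5000 * L ^ 2) := by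
    calc (n : ℝ) + s = ((n + s : ℕ) : ℝ) := by push_cast; ring
    _ ≤ (p : ℝ) := by exact_mod_cast hps
    _ ≤ _ := hle
  have hpos : (0 : ℝ) < 5000 * L ^ 2 := by positivity
  have key : 5000 * (s : ℝ) * L ^ 2 ≤ (n : ℝ) := by
    have h2 : (s : ℝ) ≤ (n : ℝ) / (5000 * L ^ 2) := by linarith
    calc 5000 * (s : ℝ) * L ^ 2 = (s : ℝ) * (5000 * L ^ 2) := by ring
    _ ≤ ((n : ℝ) / (5000 * L ^ 2)) * (5000 * L ^ 2) :=
        mul_le_mul_of_nonneg_right h2 hpos.le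
    _ = (n : ℝ) := div_mul_cancel₀ _ hpos.ne'
  have hs0 : (0 : ℝ) < (s : ℝ) := by
    have : (288 : ℝ) ≤ (s : ℝ) := by exact_mod_cast hs
    linarith
  have hlogs : Real.log 288 ≤ Real.log s :=
    Real.log_le_log (by norm_num) (by exact_mod_cast hs)
  have hlogs0 : (5.4 : ℝ) < Real.log s := lt_of_lt_of_le log_288 hlogs
  have hLbig : 14.6 + Real.log s < L := by
    have h1 : Real.log (5000 * (s : ℝ) * L ^ 2) ≤ L := by
      have := Real.log_le_log (by positivity) key
      exact this
    have h2 : Real.log (5000 * (s : ℝ) * L ^ 2)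
        = Real.log 5000 + Real.log s + 2 * Real.log L := by
      rw [Real.log_mul (by positivity) (by positivity),
        Real.log_mul (by norm_num) (by positivity), Real.log_pow]
      push_cast
      ring
    have h4 : (213 : ℝ) / 70 < Real.log L :=
      lt_of_lt_of_le log_2097e2 (Real.log_le_log (by norm_num) hL.le)
    have h5 := log_5000
    rw [h2] at h1
    have : (8.516 : ℝ) + 2 * (213 / 70) > 14.6 := by norm_num
    linarith
  have hsumpos : (0 : ℝ) < 14.6 + Real.log s := by linarith
  have hsq : (14.6 + Real.log s) ^ 2 < L ^ 2 := by nlinarith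
  constructor
  · nlinarith
  · have h400 : (400 : ℝ) < L ^ 2 := by nlinarith
    nlinarith [mul_pos hs0 (by linarith : (0 : ℝ) < L ^ 2 - 400)]
end
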